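/- The entropy vector of the state |ψ⟩ = (1/3)∑_{i,j=0}^{2} |i⟩_A |j⟩_B |i⊕j⟩_C |i⊕2j⟩_D (arithmetic mod 3) on four qutrits satisfies S(X) = log 3 for each single party X ∈ {A,B,C,D} and S(XY) = 2 log 3 for each pair, i.e., it is a 4-party absolutely maximally entangled state. -/

import Mathlib

open scoped Classical in
/-- Reduced density matrix of the pure state `ψ` on the subsystem `s`, padded
with zero rows/columns: indices are full configurations, required to be `0`
outside `s`; the entry is the partial trace over the complement of `s` of
`|ψ⟩⟨ψ|`.  Padding by zeros does not affect the von Neumann entropy. -/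
noncomputable def reducedMatrix {n D : ℕ} [NeZero D]
    (ψ : (Fin n → Fin D) → ℂ) (s : Finset (Fin n)) :
    Matrix (Fin n → Fin D) (Fin n → Fin D) ℂ :=
  fun a b =>
    if (∀ i, i ∉ s → a i = 0 ∧ b i = 0) then
      ∑ c : Fin n → Fin D,
        if (∀ i ∈ s, c i = 0) then
          ψ (fun i => if i ∈ s then a i else c i) *
            (starRingEnd ℂ) (ψ (fun i => if i ∈ s then b i else c i))
        else 0
    else 0

open scoped Classical in
/-- Von Neumann entropy `S(ρ) = −∑ λ log λ` of a (Hermitian) matrix, via its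
eigenvalues (with the convention `0 · log 0 = 0`). -/
noncomputable def vonNeumannEntropy {ι : Type} [Fintype ι] [DecidableEq ι]
    (ρ : Matrix ι ι ℂ) : ℝ :=
  if h : ρ.IsHermitian then
    -∑ i, h.eigenvalues i * Real.log (h.eigenvalues i)
  else 0

/-- The four-qutrit perfect-tensor state
`|ψ⟩ = (1/3) ∑_{i,j} |i⟩_A |j⟩_B |i⊕j⟩_C |i⊕2j⟩_D` (mod 3). -/
noncomputable def perfectTensorState : (Fin 4 → Fin 3) → ℂ :=
  fun v => if v 2 = v 0 + v 1 ∧ v 3 = v 0 + 2 * v 1 then (1 / 3 : ℂ) else 0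

/-! ### Auxiliary machinery -/

section Diagonal

open Matrix Polynomial

variable {ι : Type} [Fintype ι] [DecidableEq ι]

/-- The multiset of eigenvalues of a real diagonal matrix is the multiset of its
diagonal entries. -/
lemma eigenvalues_multiset_diagonal (d : ι → ℝ)
    (hH : (Matrix.diagonal (fun i => (d i : ℂ))).IsHermitian) :
    (Finset.univ.val.map fun i => (d i : ℂ)) =
      (Finset.univ.val.map fun i => ((hH.eigenvalues i : ℝ) : ℂ)) := by
  set e := hH.eigenvalues with he
  set U : Matrix ι ι ℂ := (Matrix.IsHermitian.eigenvectorUnitary hH : Matrix ι ι ℂ) with hUdef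
  have hU : star U * U = 1 :=
    Matrix.mem_unitaryGroup_iff'.mp (Matrix.IsHermitian.eigenvectorUnitary hH).2
  have hdetU : (star U).det * U.det = 1 := by
    rw [← Matrix.det_mul, hU, Matrix.det_one]
  have key : star U * Matrix.diagonal (fun i => (d i : ℂ)) * U
      = Matrix.diagonal fun i => ((e i : ℝ) : ℂ) := by
    have := Matrix.IsHermitian.conjStarAlgAut_star_eigenvectorUnitary hH
    simp only [Unitary.conjStarAlgAut_apply, Unitary.coe_star, star_star] at this
    exact this
  have hdet : ∀ z : ℂ, ∏ i, (z - (d i : ℂ)) = ∏ i, (z - ((e i : ℝ) : ℂ)) := by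
    intro z
    have conj_eq : star U * (z • (1 : Matrix ι ι ℂ) - Matrix.diagonal (fun i => (d i : ℂ))) * U
        = z • (1 : Matrix ι ι ℂ) - Matrix.diagonal fun i => ((e i : ℝ) : ℂ) := by
      rw [Matrix.mul_sub, Matrix.sub_mul, key]
      congr 1
      rw [Matrix.mul_smul, Matrix.smul_mul, mul_one, hU]
    calc ∏ i, (z - (d i : ℂ))
        = (Matrix.diagonal fun i => z - (d i : ℂ)).det := (Matrix.det_diagonal).symm
      _ = (z • (1 : Matrix ι ι ℂ) - Matrix.diagonal (fun i => (d i : ℂ))).det := by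
          rw [Matrix.smul_one_eq_diagonal, ← Matrix.diagonal_sub]
      _ = (star U * (z • (1 : Matrix ι ι ℂ) - Matrix.diagonal (fun i => (d i : ℂ))) * U).det := by
          rw [Matrix.det_mul, Matrix.det_mul, mul_comm ((star U).det), mul_assoc,
            hdetU, mul_one]
      _ = (z • (1 : Matrix ι ι ℂ) - Matrix.diagonal fun i => ((e i : ℝ) : ℂ)).det := by
          rw [conj_eq]
      _ = (Matrix.diagonal fun i => z - ((e i : ℝ) : ℂ)).det := by
          rw [Matrix.smul_one_eq_diagonal, ← Matrix.diagonal_sub]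
      _ = ∏ i, (z - ((e i : ℝ) : ℂ)) := Matrix.det_diagonal
  have hpoly :
      (((Finset.univ.val.map fun i => (d i : ℂ)).map fun r => (X : ℂ[X]) - C r)).prod =
      (((Finset.univ.val.map fun i => ((e i : ℝ) : ℂ)).map fun r => (X : ℂ[X]) - C r)).prod := by
    apply Polynomial.funext
    intro z
    have h1 : ∀ f : ι → ℂ,
        Polynomial.eval z ((Finset.univ.val.map f).map
          fun r => (X : ℂ[X]) - C r).prod = ∏ i, (z - f i) := by
      intro f
      rw [Polynomial.eval_multiset_prod, Multiset.map_map, Multiset.map_map]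
      rw [show (Polynomial.eval z ∘ fun r => (X : ℂ[X]) - C r) ∘ f
          = fun i => z - f i from funext fun i => by simp]
      exact (Finset.prod_eq_multiset_prod _ _).symm
    rw [h1, h1, hdet]
  have := congrArg Polynomial.roots hpoly
  rwa [Polynomial.roots_multiset_prod_X_sub_C, Polynomial.roots_multiset_prod_X_sub_C] at this

/-- Von Neumann entropy of a real diagonal matrix. -/
lemma vonNeumannEntropy_diagonal (d : ι → ℝ) :
    vonNeumannEntropy (Matrix.diagonal (fun i => (d i : ℂ)))
      = -∑ i, d i * Real.log (d i) := by
  have hsa : IsSelfAdjoint (fun i => (d i : ℂ)) := by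
    funext i
    simp [Pi.star_apply, Complex.conj_ofReal]
  have hH : (Matrix.diagonal (fun i => (d i : ℂ))).IsHermitian :=
    Matrix.isHermitian_diagonal_of_self_adjoint _ hsa
  rw [vonNeumannEntropy, dif_pos hH]
  congr 1
  have hms := eigenvalues_multiset_diagonal d hH
  have key : ∀ f : ℝ → ℝ, ∑ i, f (hH.eigenvalues i) = ∑ i, f (d i) := by
    intro f
    have h1 : ∀ g : ι → ℝ,
        ((Finset.univ.val.map fun i => ((g i : ℝ) : ℂ)).map
          fun z => f z.re).sum = ∑ i, f (g i) := by
      intro g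
      rw [Multiset.map_map]
      rw [show ((fun z : ℂ => f z.re) ∘ fun i => ((g i : ℝ) : ℂ))
          = fun i => f (g i) from funext fun i => by simp]
      exact (Finset.sum_eq_multiset_sum _ _).symm
    rw [← h1 hH.eigenvalues, ← h1 d, hms]
  exact key (fun x => x * Real.log x)

end Diagonal

/-! ### Combinatorics of the perfect tensor -/

def Tc (v : Fin 4 → Fin 3) : Prop := v 2 = v 0 + v 1 ∧ v 3 = v 0 + 2 * v 1

instance : DecidablePred Tc := fun v => by unfold Tc; infer_instance

def mix (s : Finset (Fin 4)) (a c : Fin 4 → Fin 3) : Fin 4 → Fin 3 :=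
  fun i => if i ∈ s then a i else c i

def ent (s : Finset (Fin 4)) (a b : Fin 4 → Fin 3) : ℕ :=
  (Finset.univ.filter (fun c : Fin 4 → Fin 3 =>
    (∀ i ∈ s, c i = 0) ∧ Tc (mix s a c) ∧ Tc (mix s b c))).card

lemma entry_eq (s : Finset (Fin 4)) (a b : Fin 4 → Fin 3) :
    reducedMatrix perfectTensorState s a b =
      if (∀ i, i ∉ s → a i = 0 ∧ b i = 0) then (ent s a b : ℂ) / 9 else 0 := by
  rw [reducedMatrix]
  split_ifs with h
  · have step : ∀ c : Fin 4 → Fin 3,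
        (if (∀ i ∈ s, c i = 0) then
          perfectTensorState (fun i => if i ∈ s then a i else c i) *
            (starRingEnd ℂ) (perfectTensorState (fun i => if i ∈ s then b i else c i))
        else 0)
        = if ((∀ i ∈ s, c i = 0) ∧ Tc (mix s a c) ∧ Tc (mix s b c)) then (1 / 9 : ℂ)
          else 0 := by
      intro c
      have hc : (starRingEnd ℂ) (1 / 3 : ℂ) = 1 / 3 := by
        rw [show (1 / 3 : ℂ) = ((1 / 3 : ℝ) : ℂ) by norm_num, Complex.conj_ofReal]
      have hψ : ∀ v, perfectTensorState v = if Tc v then (1 / 3 : ℂ) else 0 := by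
        intro v
        unfold perfectTensorState Tc
        exact if_congr Iff.rfl rfl rfl
      rw [show (fun i => if i ∈ s then a i else c i) = mix s a c from rfl,
        show (fun i => if i ∈ s then b i else c i) = mix s b c from rfl, hψ, hψ,
        apply_ite (starRingEnd ℂ), map_zero, hc, ite_zero_mul_ite_zero, ite_and]
      split_ifs <;> first | tauto | norm_num
    rw [Finset.sum_congr rfl (fun c _ => step c), Finset.sum_ite, Finset.sum_const,
      Finset.sum_const_zero, add_zero, nsmul_eq_mul, ent]
    rw [Finset.filter_congr_decidable, mul_one_div]
  · rfl

lemma reduced_eq_diag (s : Finset (Fin 4)) (K : ℕ)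
    (hod : ∀ a b : Fin 4 → Fin 3, (∀ i ∉ s, a i = 0) → (∀ i ∉ s, b i = 0) → a ≠ b →
      ent s a b = 0)
    (hdiag : ∀ a : Fin 4 → Fin 3, (∀ i ∉ s, a i = 0) → ent s a a = K) :
    reducedMatrix perfectTensorState s =
      Matrix.diagonal (fun a : Fin 4 → Fin 3 =>
        (((if (∀ i ∉ s, a i = 0) then (K : ℝ) / 9 else 0) : ℝ) : ℂ)) := by
  ext a b
  rw [entry_eq]
  by_cases hab : a = b
  · subst hab
    rw [Matrix.diagonal_apply_eq]
    by_cases hs : ∀ i ∉ s, a i = 0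
    · rw [if_pos (fun i hi => ⟨hs i hi, hs i hi⟩), if_pos hs, hdiag a hs]
      push_cast
      ring
    · rw [if_neg, if_neg hs, Complex.ofReal_zero]
      intro hcon
      exact hs fun i hi => (hcon i hi).1
  · rw [Matrix.diagonal_apply_ne _ hab]
    split_ifs with h
    · rw [hod a b (fun i hi => (h i hi).1) (fun i hi => (h i hi).2) hab]
      norm_num
    · rfl

/-! ### Case checks by `decide` -/

set_option synthInstance.maxHeartbeats 2000000 in
set_option synthInstance.maxSize 2000 in
set_option maxHeartbeats 4000000 in
set_option maxRecDepth 100000 in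
lemma single_od : ∀ X : Fin 4, ∀ a b : Fin 4 → Fin 3,
    (∀ i ∉ ({X} : Finset (Fin 4)), a i = 0) → (∀ i ∉ ({X} : Finset (Fin 4)), b i = 0) →
    a ≠ b → ent {X} a b = 0 := by decide

set_option maxHeartbeats 4000000 in
set_option maxRecDepth 100000 in
lemma single_diag : ∀ X : Fin 4, ∀ a : Fin 4 → Fin 3,
    (∀ i ∉ ({X} : Finset (Fin 4)), a i = 0) → ent {X} a a = 3 := by decide

set_option maxHeartbeats 4000000 in
set_option maxRecDepth 100000 in
lemma single_card : ∀ X : Fin 4,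
    (Finset.univ.filter (fun a : Fin 4 → Fin 3 =>
      ∀ i ∉ ({X} : Finset (Fin 4)), a i = 0)).card = 3 := by decide

set_option synthInstance.maxHeartbeats 2000000 in
set_option synthInstance.maxSize 2000 in
set_option maxHeartbeats 8000000 in
set_option maxRecDepth 200000 in
lemma pair_od : ∀ X Y : Fin 4, X ≠ Y → ∀ a b : Fin 4 → Fin 3,
    (∀ i ∉ ({X, Y} : Finset (Fin 4)), a i = 0) →
    (∀ i ∉ ({X, Y} : Finset (Fin 4)), b i = 0) →
    a ≠ b → ent {X, Y} a b = 0 := by decide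

set_option maxHeartbeats 2000000 in
set_option maxRecDepth 200000 in
lemma pair_diag : ∀ X Y : Fin 4, X ≠ Y → ∀ a : Fin 4 → Fin 3,
    (∀ i ∉ ({X, Y} : Finset (Fin 4)), a i = 0) → ent {X, Y} a a = 1 := by decide

set_option maxHeartbeats 2000000 in
set_option maxRecDepth 200000 in
lemma pair_card : ∀ X Y : Fin 4, X ≠ Y →
    (Finset.univ.filter (fun a : Fin 4 → Fin 3 =>
      ∀ i ∉ ({X, Y} : Finset (Fin 4)), a i = 0)).card = 9 := by decide

/-! ### Entropy of the marginals -/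

lemma entropy_formula (s : Finset (Fin 4)) (K N : ℕ)
    (hN : (Finset.univ.filter (fun a : Fin 4 → Fin 3 => ∀ i ∉ s, a i = 0)).card = N) :
    vonNeumannEntropy (Matrix.diagonal (fun a : Fin 4 → Fin 3 =>
        (((if (∀ i ∉ s, a i = 0) then (K : ℝ) / 9 else 0) : ℝ) : ℂ)))
      = -(N * ((K : ℝ) / 9 * Real.log ((K : ℝ) / 9))) := by
  rw [vonNeumannEntropy_diagonal]
  congr 1
  have step : ∀ a : Fin 4 → Fin 3,
      (if (∀ i ∉ s, a i = 0) then (K : ℝ) / 9 else 0) *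
        Real.log (if (∀ i ∉ s, a i = 0) then (K : ℝ) / 9 else 0)
      = if (∀ i ∉ s, a i = 0) then (K : ℝ) / 9 * Real.log ((K : ℝ) / 9) else 0 := by
    intro a
    split_ifs with h
    · rfl
    · simp
  rw [Finset.sum_congr rfl (fun a _ => step a), Finset.sum_ite, Finset.sum_const,
    Finset.sum_const_zero, add_zero, nsmul_eq_mul, Finset.filter_congr_decidable, hN]


/-- The state `|ψ⟩ = (1/3) ∑_{i,j} |i⟩|j⟩|i⊕j⟩|i⊕2j⟩` is AME(4,3): every
single-party marginal has entropy `log 3` and every two-party marginal has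
entropy `2 log 3`. -/
theorem perfectTensor_is_AME :
    (∀ X : Fin 4,
      vonNeumannEntropy (reducedMatrix perfectTensorState {X}) = Real.log 3) ∧
    (∀ X Y : Fin 4, X ≠ Y →
      vonNeumannEntropy (reducedMatrix perfectTensorState {X, Y}) =
        2 * Real.log 3) := by
  constructor
  · intro X
    rw [reduced_eq_diag {X} 3 (single_od X) (single_diag X),
      entropy_formula {X} 3 3 (single_card X)]
    have h9 : ((3 : ℕ) : ℝ) / 9 = (3 : ℝ)⁻¹ := by norm_num
    rw [h9, Real.log_inv]
    push_cast
    ring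
  · intro X Y hXY
    rw [reduced_eq_diag {X, Y} 1 (pair_od X Y hXY) (pair_diag X Y hXY),
      entropy_formula {X, Y} 1 9 (pair_card X Y hXY)]
    have h9 : ((1 : ℕ) : ℝ) / 9 = ((9 : ℝ))⁻¹ := by norm_num
    have h99 : Real.log 9 = 2 * Real.log 3 := by
      rw [show (9 : ℝ) = 3 ^ 2 by norm_num, Real.log_pow]
      push_cast; ring
    rw [h9, Real.log_inv, h99]
    push_cast
    ring
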